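/- arXiv:2407.02619 — 2 statements merged into one kernel-verified Lean document; each statement's English description precedes it below -/
import Mathlib

section
/- Over K = ℝ with the trivial absolute value, every signed seminorm on a finite-dimensional real vector space V is diagonalizable: it equals ||·||_{B,c} for some ordered basis B = (b_1,…,b_n) and parameters c_1 ≥ … ≥ c_n ≥ 0, where ||Σλ_i b_i||_{B,c} = sgn(λ_j)·c_j for j minimal with |λ_j|_triv · c_j maximal (here |λ|_triv = 1 for λ ≠ 0). -/
noncomputable section

variable {K : Type*} [Field K] [LinearOrder K] [IsStrictOrderedRing K] {V : Type*} [AddCommGroup V] [Module K V]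

/-- The sign of an element of a linear ordered field, as a real number. -/
def sgn (x : K) : ℝ := if 0 < x then 1 else if x < 0 then -1 else 0

/-- The trivial absolute value. -/
def trivabs (x : K) : ℝ := if x = 0 then 0 else 1

/-- `K` is real closed. -/
def IsRealClosed' (K : Type*) [Field K] [LinearOrder K] [IsStrictOrderedRing K] : Prop :=
  (∀ x : K, 0 ≤ x → ∃ y, y * y = x) ∧
  ∀ p : Polynomial K, Odd p.natDegree → ∃ x, p.eval x = 0

/-- A signed seminorm on `V` with respect to the trivial absolute value on `K`
(note `sgn c * trivabs c = sgn c`). -/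
def IsSignedSeminormTriv (N : V → ℝ) : Prop :=
  (∀ (c : K) (v : V), N (c • v) = sgn c * N v) ∧
  (∀ v w : V, min (N v) (N w) ≤ N (v + w) ∧ N (v + w) ≤ max (N v) (N w))

/-- `j` is the minimal index at which `a (lam j) * c j` attains its maximum. -/
def DiagAt {n : ℕ} (a : K → ℝ) (lam : Fin n → K) (c : Fin n → ℝ) (j : Fin n) : Prop :=
  (∀ i, a (lam i) * c i ≤ a (lam j) * c j) ∧
  (∀ i, i < j → a (lam i) * c i < a (lam j) * c j)

lemma sgn_of_pos {x : K} (h : 0 < x) : sgn x = 1 := by simp [sgn, h]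
lemma sgn_of_neg {x : K} (h : x < 0) : sgn x = -1 := by simp [sgn, h, not_lt.mpr h.le]
@[simp] lemma sgn_zero : sgn (0 : K) = 0 := by simp [sgn]
lemma abs_sgn_le (x : K) : |sgn x| ≤ 1 := by
  unfold sgn; split_ifs <;> simp

section
variable {N : V → ℝ} (hN : IsSignedSeminormTriv (K := K) N)
include hN

lemma N_zero : N 0 = 0 := by
  have := hN.1 0 0
  simpa using this

lemma N_smul_pos {t : K} (ht : 0 < t) (v : V) : N (t • v) = N v := by
  rw [hN.1, sgn_of_pos ht, one_mul]

lemma N_neg (v : V) : N (-v) = - N v := by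
  have := hN.1 (-1) v
  rw [sgn_of_neg (by norm_num : (-1:K) < 0)] at this
  simpa using this

lemma absN_add (v w : V) : |N (v + w)| ≤ max |N v| |N w| := by
  have h1 := (hN.2 v w).1
  have h2 := (hN.2 v w).2
  rw [abs_le]
  refine ⟨le_trans ?_ h1, h2.trans (max_le_max (le_abs_self _) (le_abs_self _))⟩
  refine le_min ?_ ?_
  · exact le_trans (neg_le_neg (le_max_left _ _)) (neg_abs_le _)
  · exact le_trans (neg_le_neg (le_max_right _ _)) (neg_abs_le _)

lemma absN_smul (t : K) (v : V) : |N (t • v)| ≤ |N v| := by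
  rw [hN.1, abs_mul]
  calc |sgn t| * |N v| ≤ 1 * |N v| := by
        exact mul_le_mul_of_nonneg_right (abs_sgn_le t) (abs_nonneg _)
    _ = |N v| := one_mul _

lemma N_span_bound {s : Set V} {r : ℝ} (hr : 0 ≤ r) (hb : ∀ x ∈ s, |N x| ≤ r) :
    ∀ v ∈ Submodule.span K s, |N v| ≤ r := by
  intro v hv
  induction hv using Submodule.span_induction with
  | mem x hx => exact hb x hx
  | zero => simpa [N_zero hN] using hr
  | add x y _ _ hx hy => exact (absN_add hN x y).trans (max_le hx hy)
  | smul t x _ hx => exact (absN_smul hN t x).trans hx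

end

section Functional

variable {V : Type*} [AddCommGroup V] [Module ℝ V] {N : V → ℝ}

lemma exists_functional (hN : IsSignedSeminormTriv (K := ℝ) N)
    {ι : Type*} [Fintype ι] (e : Module.Basis ι ℝ V) {c0 : ℝ} (hc0 : 0 < c0)
    (hbound : ∀ v, |N v| ≤ c0) (hex : ∃ i₀, |N (e i₀)| = c0) :
    ∃ (f : V →ₗ[ℝ] ℝ) (b0 : V), f b0 = 1 ∧ ∀ x, 0 < f x → N x = c0 := by
  classical
  set s : ι → ℝ := fun i => if 0 ≤ N (e i) then 1 else -1 with hs_def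
  have hs2 : ∀ i, s i * s i = 1 := by
    intro i; by_cases h : 0 ≤ N (e i) <;> simp [hs_def, h]
  have habs_s : ∀ i, |s i| = 1 := by
    intro i; by_cases h : 0 ≤ N (e i) <;> simp [hs_def, h]
  set b0 : V := ∑ i, s i • e i with hb0_def
  -- positive plus C is positive
  have hpos_add : ∀ x y : V, N x = c0 → -c0 < N y → N (x + y) = c0 := by
    intro x y hx hy
    by_contra h
    have h1 : N (x + y) ≤ c0 := (le_abs_self _).trans (hbound _)
    have h2 : N (x + y) < c0 := lt_of_le_of_ne h1 h
    have h3 := (hN.2 (x + y) (-y)).2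
    rw [N_neg hN] at h3
    have h4 : x + y + -y = x := by abel
    rw [h4, hx] at h3
    have : max (N (x+y)) (-N y) < c0 := max_lt h2 (by linarith)
    linarith
  have hneg_add : ∀ x y : V, N x = -c0 → N y < c0 → N (x + y) = -c0 := by
    intro x y hx hy
    have := hpos_add (-x) (-y) (by rw [N_neg hN, hx]; ring) (by rw [N_neg hN]; linarith)
    have h4 : -x + -y = -(x + y) := by abel
    rw [h4, N_neg hN] at this
    linarith
  have hCadd : ∀ x y : V, -c0 < N x → -c0 < N y → -c0 < N (x + y) := by
    intro x y hx hy
    have := (hN.2 x y).1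
    rcases min_cases (N x) (N y) with ⟨h, _⟩ | ⟨h, _⟩ <;> rw [h] at this <;> linarith
  have hsei : ∀ i, |N (e i)| = c0 → N (s i • e i) = c0 := by
    intro i hi
    by_cases h : 0 ≤ N (e i)
    · have hs1 : s i = 1 := by simp [hs_def, h]
      rw [hs1, one_smul, ← abs_of_nonneg h]; exact hi
    · have hs1 : s i = -1 := by simp [hs_def, h]
      have hval : N (e i) = -c0 := by rw [abs_of_neg (not_le.mp h)] at hi; linarith
      rw [hs1, hN.1, sgn_of_neg (by norm_num : (-1:ℝ) < 0), hval]; ring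
  -- core domination sum
  have key : ∀ (m : ℝ) (r : ι → ℝ), (∀ i, |r i| < m) →
      N (∑ i, (m * s i + r i) • e i) = c0 := by
    intro m r hr
    obtain ⟨i₀, hi₀⟩ := hex
    have hm0 : 0 < m := lt_of_le_of_lt (abs_nonneg (r i₀)) (hr i₀)
    have hTc0 : ∀ i, |N (e i)| = c0 → N ((m * s i + r i) • e i) = c0 := by
      intro i hi
      have hcoef : (m + s i * r i) * s i = m * s i + r i := by
        linear_combination r i * hs2 i
      have hcpos : 0 < m + s i * r i := by
        have h1 : |s i * r i| = |r i| := by rw [abs_mul, habs_s i, one_mul]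
        have h2 := neg_abs_le (s i * r i)
        rw [h1] at h2
        linarith [hr i]
      calc N ((m * s i + r i) • e i) = N ((m + s i * r i) • s i • e i) := by
            rw [smul_smul, hcoef]
        _ = N (s i • e i) := N_smul_pos hN hcpos _
        _ = c0 := hsei i hi
    have hTC : ∀ i, -c0 < N ((m * s i + r i) • e i) := by
      intro i
      by_cases hi : |N (e i)| = c0
      · rw [hTc0 i hi]; linarith
      · have h1 : |N (e i)| < c0 := lt_of_le_of_ne (hbound _) hi
        have h2 := lt_of_le_of_lt (absN_smul hN (m * s i + r i) (e i)) h1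
        have := neg_abs_le (N ((m * s i + r i) • e i))
        linarith
    have hsplit := Finset.add_sum_erase Finset.univ
      (fun i => (m * s i + r i) • e i) (Finset.mem_univ i₀)
    rw [← hsplit]
    refine hpos_add _ _ (hTc0 i₀ hi₀) ?_
    refine Finset.sum_induction _ (fun v => -c0 < N v) (fun a b ha hb => hCadd a b ha hb)
      (by show -c0 < N 0; rw [N_zero hN]; linarith) ?_
    intro i _
    exact hTC i
  have hNb0 : N b0 = c0 := by
    have := key 1 (fun _ => 0) (fun i => by norm_num)
    simpa [hb0_def] using this
  have hsb0 : ∀ t : ℝ, 0 < t → N (t • b0) = c0 := by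
    intro t ht; rw [N_smul_pos hN ht, hNb0]
  -- domination of arbitrary x
  have hdom : ∀ x : V, ∃ m : ℝ, ∀ m' : ℝ, m ≤ m' →
      N (m' • b0 - x) = c0 ∧ N (m' • b0 + x) = c0 := by
    intro x
    set r : ι → ℝ := fun i => e.repr x i with hr_def
    refine ⟨1 + ∑ i, |r i|, fun m' hm' => ?_⟩
    have hrm : ∀ i, |r i| < m' := by
      intro i
      have h1 : |r i| ≤ ∑ j, |r j| :=
        Finset.single_le_sum (fun j _ => abs_nonneg (r j)) (Finset.mem_univ i)
      linarith
    have hxrepr : ∑ i, r i • e i = x := e.sum_repr x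
    have hsum1 : m' • b0 - x = ∑ i, (m' * s i + (-(r i))) • e i := by
      rw [hb0_def, Finset.smul_sum, ← hxrepr, ← Finset.sum_sub_distrib]
      congr 1; ext i
      rw [smul_smul, add_smul, sub_eq_add_neg, neg_smul]
    have hsum2 : m' • b0 + x = ∑ i, (m' * s i + r i) • e i := by
      rw [hb0_def, Finset.smul_sum, ← hxrepr, ← Finset.sum_add_distrib]
      congr 1; ext i
      rw [smul_smul, add_smul]
    constructor
    · rw [hsum1]; exact key m' (fun i => -(r i)) (fun i => by rw [abs_neg]; exact hrm i)
    · rw [hsum2]; exact key m' r hrm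
  -- the cut sets
  set L : V → Set ℝ := fun x => {t : ℝ | -c0 < N (x - t • b0)} with hL_def
  have hLne : ∀ x, (L x).Nonempty := by
    intro x
    obtain ⟨m, hm⟩ := hdom x
    refine ⟨-(max m 0 + 1), ?_⟩
    have h := (hm (max m 0 + 1) (by linarith [le_max_left m 0])).2
    have heq : x - (-(max m 0 + 1)) • b0 = (max m 0 + 1) • b0 + x := by
      rw [neg_smul, sub_neg_eq_add, add_comm]
    rw [hL_def]; simp only [Set.mem_setOf_eq]
    rw [heq, h]; linarith
  have hLbdd : ∀ x, BddAbove (L x) := by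
    intro x
    obtain ⟨m, hm⟩ := hdom x
    refine ⟨max m 0, fun t ht => ?_⟩
    by_contra hc
    push_neg at hc
    have hmt : m ≤ t := le_trans (le_max_left m 0) hc.le
    have h := (hm t hmt).1
    have heq : x - t • b0 = -(t • b0 - x) := by abel
    rw [hL_def] at ht
    simp only [Set.mem_setOf_eq] at ht
    rw [heq, N_neg hN, h] at ht
    linarith
  have hLdown : ∀ x, ∀ t' t : ℝ, t' ≤ t → t ∈ L x → t' ∈ L x := by
    intro x t' t htt ht
    rcases eq_or_lt_of_le htt with rfl | hlt
    · exact ht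
    · simp only [hL_def, Set.mem_setOf_eq] at ht ⊢
      have heq : x - t' • b0 = (t - t') • b0 + (x - t • b0) := by
        rw [sub_smul]; abel
      rw [heq, hpos_add _ _ (hsb0 (t - t') (by linarith)) ht]
      linarith
  set f : V → ℝ := fun x => sSup (L x) with hf_def
  have hmem_le : ∀ x t, t ∈ L x → t ≤ f x := fun x t ht => le_csSup (hLbdd x) ht
  have hlt_mem : ∀ x t, t < f x → t ∈ L x := by
    intro x t ht
    obtain ⟨u, hu, htu⟩ := exists_lt_of_lt_csSup (hLne x) ht
    exact hLdown x t u htu.le hu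
  have hgt_notmem : ∀ x t, f x < t → N (x - t • b0) = -c0 := by
    intro x t ht
    have hnot : t ∉ L x := fun h => absurd (hmem_le x t h) (not_le.mpr ht)
    simp only [hL_def, Set.mem_setOf_eq, not_lt] at hnot
    have := neg_abs_le (N (x - t • b0))
    have := hbound (x - t • b0)
    have h2 := neg_le_of_abs_le (hbound (x - t • b0))
    linarith
  have hf_pos : ∀ x, 0 < f x → N x = c0 := by
    intro x hx
    have hhalf : f x / 2 ∈ L x := hlt_mem x _ (by linarith)
    simp only [hL_def, Set.mem_setOf_eq] at hhalf
    have heq : x = (f x / 2) • b0 + (x - (f x / 2) • b0) := by abel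
    rw [heq]
    exact hpos_add _ _ (hsb0 _ (by linarith)) hhalf
  have hfb0 : f b0 = 1 := by
    have hLeq : L b0 = Set.Iic 1 := by
      ext t
      simp only [hL_def, Set.mem_setOf_eq, Set.mem_Iic]
      have heq : b0 - t • b0 = (1 - t) • b0 := by rw [sub_smul, one_smul]
      rw [heq]
      constructor
      · intro h
        by_contra hc
        push_neg at hc
        rw [hN.1, sgn_of_neg (by linarith : (1:ℝ) - t < 0), hNb0] at h
        linarith
      · intro h
        rcases eq_or_lt_of_le h with rfl | hlt
        · simp only [sub_self, zero_smul]
          rw [N_zero hN]; linarith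
        · rw [hsb0 _ (by linarith)]; linarith
    rw [hf_def]; simp only; rw [hLeq, csSup_Iic]
  have hf_zero : f 0 = 0 := by
    have hLeq : L 0 = Set.Iic 0 := by
      ext t
      simp only [hL_def, Set.mem_setOf_eq, Set.mem_Iic]
      have heq : (0 : V) - t • b0 = (-t) • b0 := by rw [neg_smul]; abel
      rw [heq]
      constructor
      · intro h
        by_contra hc
        push_neg at hc
        rw [hN.1, sgn_of_neg (by linarith : -t < 0), hNb0] at h
        linarith
      · intro h
        rcases eq_or_lt_of_le h with rfl | hlt
        · simp only [neg_zero, zero_smul]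
          rw [N_zero hN]; linarith
        · rw [hsb0 _ (by linarith)]; linarith
    rw [hf_def]; simp only; rw [hLeq, csSup_Iic]
  have hf_add : ∀ x y, f (x + y) = f x + f y := by
    intro x y
    have hsuper : f x + f y ≤ f (x + y) := by
      have step : ∀ t ∈ L x, ∀ u ∈ L y, t + u ∈ L (x + y) := by
        intro t ht u hu
        simp only [hL_def, Set.mem_setOf_eq] at ht hu ⊢
        have heq : x + y - (t + u) • b0 = (x - t • b0) + (y - u • b0) := by
          rw [add_smul]; abel
        rw [heq]
        exact hCadd _ _ ht hu
      have h1 : ∀ t ∈ L x, t ≤ f (x + y) - f y := by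
        intro t ht
        have h2 : ∀ u ∈ L y, u ≤ f (x + y) - t := by
          intro u hu
          have := hmem_le _ _ (step t ht u hu)
          linarith
        have := csSup_le (hLne y) h2
        rw [hf_def]; simp only
        linarith [this]
      have := csSup_le (hLne x) h1
      rw [hf_def] at *; simp only at *
      linarith [this]
    have hsub : f (x + y) ≤ f x + f y := by
      by_contra hc
      push_neg at hc
      set δ := f (x + y) - f x - f y with hδ
      have hδpos : 0 < δ := by rw [hδ]; linarith
      have ht := hgt_notmem x (f x + δ/3) (by linarith)
      have hu := hgt_notmem y (f y + δ/3) (by linarith)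
      have hsum : N ((x + y) - ((f x + δ/3) + (f y + δ/3)) • b0) = -c0 := by
        have heq : (x + y) - ((f x + δ/3) + (f y + δ/3)) • b0 =
            (x - (f x + δ/3) • b0) + (y - (f y + δ/3) • b0) := by
          rw [add_smul]; abel
        rw [heq]
        exact hneg_add _ _ ht (by rw [hu]; linarith)
      have hmem : (f x + δ/3) + (f y + δ/3) ∈ L (x + y) := by
        apply hlt_mem
        linarith
      simp only [hL_def, Set.mem_setOf_eq] at hmem
      rw [hsum] at hmem
      linarith
    linarith
  have hf_smul_pos : ∀ (t : ℝ), 0 < t → ∀ x, f (t • x) = t * f x := by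
    intro t ht x
    have hmem_iff : ∀ u : ℝ, u ∈ L (t • x) ↔ u / t ∈ L x := by
      intro u
      simp only [hL_def, Set.mem_setOf_eq]
      have heq : t • x - u • b0 = t • (x - (u / t) • b0) := by
        rw [smul_sub, smul_smul, mul_div_cancel₀ _ (ne_of_gt ht)]
      rw [heq, N_smul_pos hN ht]
    have h1 : f (t • x) ≤ t * f x := by
      apply csSup_le (hLne _)
      intro u hu
      have := hmem_le x (u / t) ((hmem_iff u).mp hu)
      rw [div_le_iff₀ ht] at this
      linarith [this]
    have h2 : t * f x ≤ f (t • x) := by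
      have : f x ≤ f (t • x) / t := by
        apply csSup_le (hLne x)
        intro u hu
        have hmem2 : t * u ∈ L (t • x) := by
          rw [hmem_iff]
          rwa [mul_comm, mul_div_assoc, div_self (ne_of_gt ht), mul_one]
        have := hmem_le _ _ hmem2
        rw [le_div_iff₀ ht]
        linarith [this]
      calc t * f x ≤ t * (f (t • x) / t) := by
            exact mul_le_mul_of_nonneg_left this ht.le
        _ = f (t • x) := by field_simp
    linarith
  have hf_neg : ∀ x, f (-x) = - f x := by
    intro x
    have := hf_add x (-x)
    rw [add_neg_cancel, hf_zero] at this
    linarith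
  have hf_smul : ∀ (t : ℝ) (x : V), f (t • x) = t * f x := by
    intro t x
    rcases lt_trichotomy t 0 with hlt | rfl | hgt
    · have heq : t • x = (-t) • (-x) := by rw [neg_smul, smul_neg, neg_neg]
      rw [heq, hf_smul_pos (-t) (by linarith) (-x), hf_neg]
      ring
    · rw [zero_smul, hf_zero]; ring
    · exact hf_smul_pos t hgt x
  refine ⟨{ toFun := f, map_add' := hf_add, map_smul' := hf_smul }, b0, hfb0, hf_pos⟩

end Functional

universe u

lemma aux : ∀ (n : ℕ) (V : Type u) [AddCommGroup V] [Module ℝ V] [FiniteDimensional ℝ V]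
    (N : V → ℝ), IsSignedSeminormTriv (K := ℝ) N → Module.finrank ℝ V = n →
    ∃ (b : Fin n → V) (c : Fin n → ℝ),
      LinearIndependent ℝ b ∧ ⊤ ≤ Submodule.span ℝ (Set.range b) ∧
      Antitone c ∧ (∀ i, 0 ≤ c i) ∧
      ∀ (k : Fin n) (w : V), w ∈ Submodule.span ℝ (b '' {i | k < i}) → N (b k + w) = c k := by
  intro n
  induction n with
  | zero =>
    intro V _ _ _ N hN hrk
    have hsub : Subsingleton V := Module.finrank_zero_iff.mp hrk
    refine ⟨fun i => i.elim0, fun i => i.elim0, ?_, ?_, ?_, ?_, ?_⟩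
    · exact linearIndependent_empty_type
    · intro x _
      have : x = (0 : V) := Subsingleton.elim x 0
      rw [this]; exact Submodule.zero_mem _
    · intro i; exact i.elim0
    · intro i; exact i.elim0
    · intro k; exact k.elim0
  | succ m IH =>
    intro V _ _ _ N hN hrk
    have e : Module.Basis (Fin (m + 1)) ℝ V := Module.finBasisOfFinrankEq ℝ V hrk
    have hne : (Finset.univ : Finset (Fin (m + 1))).Nonempty := Finset.univ_nonempty
    set c0 : ℝ := Finset.univ.sup' hne (fun i => |N (e i)|) with hc0_def
    have hc0nn : 0 ≤ c0 := by
      rw [hc0_def]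
      exact le_trans (abs_nonneg (N (e 0)))
        (Finset.le_sup' (fun i => |N (e i)|) (Finset.mem_univ (0 : Fin (m + 1))))
    have hbound : ∀ v, |N v| ≤ c0 := by
      intro v
      refine N_span_bound hN (s := Set.range ⇑e) hc0nn ?_ v ?_
      · rintro x ⟨i, rfl⟩
        exact Finset.le_sup' (fun i => |N (e i)|) (Finset.mem_univ i)
      · rw [e.span_eq]; trivial
    have hex : ∃ i₀, |N (e i₀)| = c0 := by
      obtain ⟨i, _, hi⟩ := Finset.exists_mem_eq_sup' hne (fun i => |N (e i)|)
      exact ⟨i, hi.symm⟩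
    rcases eq_or_lt_of_le hc0nn with hc0z | hc0pos
    · -- everything is zero
      have hz : ∀ v : V, N v = 0 := by
        intro v
        have := hbound v
        rw [← hc0z] at this
        have := abs_nonneg (N v)
        exact abs_eq_zero.mp (le_antisymm (by linarith) (by positivity))
      refine ⟨e, fun _ => 0, e.linearIndependent, le_of_eq e.span_eq.symm, ?_, ?_, ?_⟩
      · intro i j _; exact le_refl 0
      · intro i; exact le_refl 0
      · intro k w _; exact hz _
    · obtain ⟨f, b0, hfb0, hfpos⟩ := exists_functional hN e hc0pos hbound hex
      set U : Submodule ℝ V := LinearMap.ker f with hU_def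
      have hrkU : Module.finrank ℝ ↥U = m := by
        have hsurj : LinearMap.range f = ⊤ := by
          rw [LinearMap.range_eq_top]
          intro r
          refine ⟨r • b0, ?_⟩
          rw [map_smul, hfb0, smul_eq_mul, mul_one]
        have := LinearMap.finrank_range_add_finrank_ker f
        rw [hsurj, finrank_top, Module.finrank_self, hrk, ← hU_def] at this
        omega
      have hN' : IsSignedSeminormTriv (K := ℝ) (fun u : U => N u) := by
        constructor
        · intro t u
          have : ((t • u : U) : V) = t • (u : V) := rfl
          simp only [this]
          exact hN.1 t (u : V)
        · intro u w
          have : ((u + w : U) : V) = (u : V) + (w : V) := rfl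
          simp only [this]
          exact hN.2 (u : V) (w : V)
      obtain ⟨b', c', hli', hsp', hanti', hcnn', hP'⟩ := IH U (fun u : U => N u) hN' hrkU
      have hc'le : ∀ i, c' i ≤ c0 := by
        intro i
        have h0 := hP' i 0 (Submodule.zero_mem _)
        rw [add_zero] at h0
        calc c' i = N (b' i : V) := h0.symm
          _ ≤ |N (b' i : V)| := le_abs_self _
          _ ≤ c0 := hbound _
      refine ⟨Fin.cons b0 (fun i => (b' i : V)), Fin.cons c0 c', ?_, ?_, ?_, ?_, ?_⟩
      · -- linear independence
        rw [linearIndependent_fin_cons]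
        constructor
        · have := hli'.map' U.subtype (Submodule.ker_subtype U)
          exact this
        · intro hmem
          have hsub : Submodule.span ℝ (Set.range fun i => (b' i : V)) ≤ U := by
            rw [Submodule.span_le]
            rintro x ⟨i, rfl⟩
            exact (b' i).2
          have : b0 ∈ U := hsub hmem
          rw [hU_def, LinearMap.mem_ker, hfb0] at this
          norm_num at this
      · -- spanning
        intro v _
        have hUspan : U ≤ Submodule.span ℝ (Set.range (Fin.cons b0 (fun i => (b' i : V)))) := by
          intro u hu
          have h1 : (⟨u, hu⟩ : U) ∈ Submodule.span ℝ (Set.range b') := hsp' trivial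
          have h2 : u ∈ Submodule.map U.subtype (Submodule.span ℝ (Set.range b')) :=
            ⟨⟨u, hu⟩, h1, rfl⟩
          rw [← Submodule.span_image] at h2
          refine Submodule.span_mono ?_ h2
          rintro x ⟨y, ⟨i, rfl⟩, rfl⟩
          exact ⟨i.succ, by rw [Fin.cons_succ]; rfl⟩
        have hb0mem : b0 ∈ Submodule.span ℝ (Set.range (Fin.cons b0 (fun i => (b' i : V)))) :=
          Submodule.subset_span ⟨0, by rw [Fin.cons_zero]⟩
        have hker : v - f v • b0 ∈ U := by
          rw [hU_def, LinearMap.mem_ker, map_sub, map_smul, hfb0, smul_eq_mul, mul_one, sub_self]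
        have := Submodule.add_mem _ (Submodule.smul_mem _ (f v) hb0mem) (hUspan hker)
        rwa [add_sub_cancel] at this
      · -- antitone
        intro i j hij
        rcases Fin.eq_zero_or_eq_succ i with rfl | ⟨i', rfl⟩
        · rcases Fin.eq_zero_or_eq_succ j with rfl | ⟨j', rfl⟩
          · exact le_refl _
          · rw [Fin.cons_zero, Fin.cons_succ]
            exact hc'le j'
        · rcases Fin.eq_zero_or_eq_succ j with rfl | ⟨j', rfl⟩
          · exact absurd hij (by simp [Fin.le_def])
          · rw [Fin.cons_succ, Fin.cons_succ]
            exact hanti' (Fin.succ_le_succ_iff.mp hij)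
      · -- nonneg
        intro i
        rcases Fin.eq_zero_or_eq_succ i with rfl | ⟨i', rfl⟩
        · rw [Fin.cons_zero]; linarith
        · rw [Fin.cons_succ]; exact hcnn' i'
      · -- the main property
        intro k w hw
        induction k using Fin.cases with
        | zero =>
          rw [Fin.cons_zero]
          have hwU : w ∈ U := by
            refine Submodule.span_le.mpr ?_ hw
            rintro x ⟨i, hi, rfl⟩
            simp only [Set.mem_setOf_eq] at hi
            obtain ⟨i', rfl⟩ := Fin.eq_succ_of_ne_zero (Fin.pos_iff_ne_zero.mp hi)
            rw [Fin.cons_succ]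
            exact (b' i').2
          have : f (b0 + w) = 1 := by
            rw [map_add, hfb0]
            rw [hU_def, LinearMap.mem_ker] at hwU
            rw [hwU, add_zero]
          exact hfpos _ (by rw [this]; norm_num)
        | succ j =>
          rw [Fin.cons_succ]
          have himg : (Fin.cons b0 (fun i => (b' i : V))) '' {i | j.succ < i} =
              U.subtype '' (b' '' {i' | j < i'}) := by
            ext x
            constructor
            · rintro ⟨i, hi, rfl⟩
              simp only [Set.mem_setOf_eq] at hi
              obtain ⟨i', rfl⟩ := Fin.eq_succ_of_ne_zero (Fin.pos_iff_ne_zero.mp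
                (lt_trans (Fin.succ_pos j) hi))
              rw [Fin.cons_succ]
              exact ⟨b' i', ⟨i', Fin.succ_lt_succ_iff.mp hi, rfl⟩, rfl⟩
            · rintro ⟨y, ⟨i', hi', rfl⟩, rfl⟩
              refine ⟨i'.succ, ?_, by rw [Fin.cons_succ]; rfl⟩
              simp only [Set.mem_setOf_eq] at hi' ⊢
              exact Fin.succ_lt_succ_iff.mpr hi'
          rw [himg, Submodule.span_image] at hw
          obtain ⟨w', hw', rfl⟩ := hw
          have := hP' j w' hw'
          rw [Fin.cons_succ]
          calc N ((b' j : V) + (U.subtype w' : V)) = N (((b' j + w' : U) : V)) := by rfl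
            _ = c' j := this


/-- Over `ℝ` with the trivial absolute value, every signed seminorm on a
finite-dimensional real vector space is diagonalizable. -/
theorem signedSeminorm_diagonalizable
    {V : Type*} [AddCommGroup V] [Module ℝ V] [FiniteDimensional ℝ V]
    (N : V → ℝ) (hN : IsSignedSeminormTriv (K := ℝ) N) :
    ∃ (B : Module.Basis (Fin (Module.finrank ℝ V)) ℝ V) (c : Fin (Module.finrank ℝ V) → ℝ),
      Antitone c ∧ (∀ i, 0 ≤ c i) ∧
      ∀ (v : V) (j : Fin (Module.finrank ℝ V)),
        DiagAt trivabs (fun i => B.repr v i) c j → N v = sgn (B.repr v j) * c j := by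
  classical
  obtain ⟨b, c, hli, hsp, hanti, hcnn, hP⟩ := aux (Module.finrank ℝ V) V N hN rfl
  set B : Module.Basis (Fin (Module.finrank ℝ V)) ℝ V := Module.Basis.mk hli hsp with hB_def
  have hBcoe : ⇑B = b := by rw [hB_def]; exact Module.Basis.coe_mk hli hsp
  refine ⟨B, c, hanti, hcnn, ?_⟩
  intro v j hD
  set lam : Fin (Module.finrank ℝ V) → ℝ := fun i => B.repr v i with hlam_def
  have hrepr : ∑ i, lam i • b i = v := by
    have h := B.sum_repr v
    rwa [hBcoe] at h
  -- Step 1: the formula at the least nonzero index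
  have hstep1 : ∀ k, lam k ≠ 0 → (∀ i, i < k → lam i = 0) →
      N v = sgn (lam k) * c k := by
    intro k hk hzero
    have h1 : ∑ i ∈ Finset.univ.filter (fun i => k ≤ i), lam i • b i = v := by
      rw [← hrepr]
      refine Finset.sum_filter_of_ne ?_
      intro i _ hne
      by_contra h
      push_neg at h
      rw [hzero i h, zero_smul] at hne
      exact hne rfl
    have hfe : Finset.univ.filter (fun i => k ≤ i) =
        insert k (Finset.univ.filter (fun i => k < i)) := by
      ext i
      simp only [Finset.mem_filter, Finset.mem_univ, true_and, Finset.mem_insert]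
      constructor
      · intro h
        rcases eq_or_lt_of_le h with rfl | hlt
        · exact Or.inl rfl
        · exact Or.inr hlt
      · rintro (rfl | hlt)
        · exact le_refl _
        · exact hlt.le
    have hknotmem : k ∉ Finset.univ.filter (fun i => k < i) := by
      simp [Finset.mem_filter]
    set w0 := ∑ i ∈ Finset.univ.filter (fun i => k < i), lam i • b i with hw0_def
    have hsum : v = lam k • b k + w0 := by
      rw [hw0_def, ← h1, hfe, Finset.sum_insert hknotmem]
    have hw0 : w0 ∈ Submodule.span ℝ (b '' {i | k < i}) := by
      rw [hw0_def]
      refine Submodule.sum_mem _ ?_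
      intro i hi
      refine Submodule.smul_mem _ _ (Submodule.subset_span ⟨i, ?_, rfl⟩)
      simpa using (Finset.mem_filter.mp hi).2
    have hvk : v = lam k • (b k + (lam k)⁻¹ • w0) := by
      rw [smul_add, smul_smul, mul_inv_cancel₀ hk, one_smul]
      exact hsum
    rw [hvk, hN.1]
    congr 1
    exact hP k _ (Submodule.smul_mem _ _ hw0)
  -- Step 2
  by_cases hall : ∀ i, lam i = 0
  · have hv0 : v = 0 := by
      rw [← hrepr]
      refine Finset.sum_eq_zero ?_
      intro i _
      rw [hall i, zero_smul]
    show N v = sgn (lam j) * c j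
    rw [hv0, N_zero hN, hall j, sgn_zero, zero_mul]
  · push_neg at hall
    obtain ⟨iw, hiw⟩ := hall
    set S := Finset.univ.filter (fun i => lam i ≠ 0) with hS_def
    have hSne : S.Nonempty := ⟨iw, by simp [hS_def, hiw]⟩
    have hi0 : lam (S.min' hSne) ≠ 0 := (Finset.mem_filter.mp (S.min'_mem hSne)).2
    set i0 := S.min' hSne with hi0_def
    have hzero : ∀ i, i < i0 → lam i = 0 := by
      intro i hi
      by_contra h
      have hmem : i ∈ S := by simp [hS_def, h]
      have := S.min'_le i hmem
      rw [← hi0_def] at this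
      exact absurd hi (not_lt.mpr this)
    have hNv := hstep1 i0 hi0 hzero
    obtain ⟨hD1, hD2⟩ := hD
    have htriv_i0 : trivabs (lam i0) = 1 := by simp [trivabs, hi0]
    have h1 : c i0 ≤ trivabs (lam j) * c j := by
      have := hD1 i0
      rwa [htriv_i0, one_mul] at this
    show N v = sgn (lam j) * c j
    rcases lt_or_ge j i0 with hji | hij
    · have hlj : lam j = 0 := hzero j hji
      have htj : trivabs (lam j) = 0 := by simp [trivabs, hlj]
      rw [htj, zero_mul] at h1
      have hc_i0 : c i0 = 0 := le_antisymm h1 (hcnn i0)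
      rw [hNv, hc_i0, mul_zero, hlj, sgn_zero, zero_mul]
    · have hcj_le : c j ≤ c i0 := hanti hij
      have htub : trivabs (lam j) ≤ 1 := by unfold trivabs; split_ifs <;> norm_num
      have htnn : 0 ≤ trivabs (lam j) := by unfold trivabs; split_ifs <;> norm_num
      have h2 : trivabs (lam j) * c j ≤ c j := by nlinarith [hcnn j]
      have hcc : c j = c i0 := le_antisymm hcj_le (by linarith)
      rcases eq_or_lt_of_le (hcnn i0) with hz | hpos
      · rw [hNv, ← hz, mul_zero, hcc, ← hz, mul_zero]
      · rcases eq_or_lt_of_le hij with heq | hlt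
        · rw [hNv, heq, hcc]
        · have h3 := hD2 i0 hlt
          rw [htriv_i0, one_mul] at h3
          linarith
end
end

section
/- Every homothety class of signed seminorms on (K^{n+1})^* lies in the real tropical linear space of the universal realizable oriented valuated matroid: for any signed seminorm ||·||^sgn on (K^{n+1})^* and any tuple C = (f_0,…,f_{n+1}) of n+2 linear functionals, 0 lies in the ℝ𝕋-hypersum ⊕_{i=0}^{n+1} (−1)^i ||f_i||^sgn · φ_univ(C − f_i), where φ_univ(g_0,…,g_n) = sgn(det[g_0,…,g_n]) · |det[g_0,…,g_n]|_K. -/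
noncomputable section

variable {K : Type*} [Field K] [LinearOrder K] [IsStrictOrderedRing K] {V : Type*} [AddCommGroup V] [Module K V]

/-- `av` is a non-Archimedean absolute value. -/
def IsNonarch (av : AbsoluteValue K ℝ) : Prop := ∀ x y : K, av (x + y) ≤ max (av x) (av y)

/-- `av` is compatible with the order on `K`: `0 ≤ a ≤ b` implies `av a ≤ av b`. -/
def Compat (av : AbsoluteValue K ℝ) : Prop := ∀ x y : K, 0 ≤ x → x ≤ y → av x ≤ av y

/-- A signed seminorm on `V` with respect to the absolute value `av` on `K`. -/
def IsSignedSeminorm (av : AbsoluteValue K ℝ) (N : V → ℝ) : Prop :=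
  (∀ (c : K) (v : V), N (c • v) = sgn c * av c * N v) ∧
  (∀ v w : V, min (N v) (N w) ≤ N (v + w) ∧ N (v + w) ≤ max (N v) (N w))

/-- Hyperaddition in the real tropical hyperfield `ℝ𝕋`. -/
def rtAdd (a b : ℝ) : Set ℝ :=
  if |b| < |a| then {a}
  else if |a| < |b| then {b}
  else if a = b then {a}
  else Set.Icc (min a b) (max a b)

/-- Iterated hypersum in `ℝ𝕋` over a list. -/
def rtSum : List ℝ → Set ℝ
  | [] => {0}
  | a :: l => ⋃ b ∈ rtSum l, rtAdd a b

/-- The universal Grassmann–Plücker function on `E = (K^{n+1})^*`. -/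
def phiUniv {n : ℕ} (av : AbsoluteValue K ℝ) (g : Fin (n + 1) → Fin (n + 1) → K) : ℝ :=
  sgn ((Matrix.of g).det) * av ((Matrix.of g).det)

/-! ### Auxiliary lemmas about `rtAdd` and `rtSum` -/

lemma rtAdd_nonempty (a b : ℝ) : (rtAdd a b).Nonempty := by
  unfold rtAdd
  split_ifs <;> first
    | exact Set.singleton_nonempty _
    | exact Set.nonempty_Icc.2 min_le_max

lemma rtAdd_subset_Icc {a b M : ℝ} (ha : |a| ≤ M) (hb : |b| ≤ M) :
    rtAdd a b ⊆ Set.Icc (-M) M := by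
  have ha' := abs_le.1 ha
  have hb' := abs_le.1 hb
  unfold rtAdd
  split_ifs <;> first
    | exact Set.singleton_subset_iff.2 (Set.mem_Icc.2 ⟨by linarith [ha'.1, hb'.1], by linarith [ha'.2, hb'.2]⟩)
    | exact Set.Icc_subset_Icc (le_min ha'.1 hb'.1) (max_le ha'.2 hb'.2)

lemma rtSum_nonempty (l : List ℝ) : (rtSum l).Nonempty := by
  induction l with
  | nil => exact ⟨0, rfl⟩
  | cons a l ih =>
    obtain ⟨b, hb⟩ := ih
    obtain ⟨c, hc⟩ := rtAdd_nonempty a b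
    exact ⟨c, Set.mem_biUnion hb hc⟩

lemma rtSum_subset_Icc {M : ℝ} (hM : 0 ≤ M) :
    ∀ {l : List ℝ}, (∀ x ∈ l, |x| ≤ M) → rtSum l ⊆ Set.Icc (-M) M := by
  intro l
  induction l with
  | nil =>
    intro _ x hx
    rw [rtSum] at hx
    simp only [Set.mem_singleton_iff] at hx
    subst hx
    exact Set.mem_Icc.2 ⟨neg_nonpos.2 hM, hM⟩
  | cons a l ih =>
    intro h x hx
    rw [rtSum] at hx
    obtain ⟨b, hb, hxb⟩ := Set.mem_iUnion₂.1 hx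
    have hbI := ih (fun y hy => h y (List.mem_cons_of_mem a hy)) hb
    have hbM : |b| ≤ M := abs_le.2 ⟨(Set.mem_Icc.1 hbI).1, (Set.mem_Icc.1 hbI).2⟩
    exact rtAdd_subset_Icc (h a (List.mem_cons_self (a := a) (l := l))) hbM hxb

lemma mem_rtAdd_left {a b : ℝ} (hb : |b| ≤ |a|) : a ∈ rtAdd a b := by
  unfold rtAdd
  split_ifs with h1 h2 h3
  · exact rfl
  · exact absurd h2 (not_lt.2 hb)
  · exact rfl
  · exact Set.mem_Icc.2 ⟨min_le_left _ _, le_max_left _ _⟩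

lemma mem_rtAdd_right {a b : ℝ} (ha : |a| ≤ |b|) : b ∈ rtAdd a b := by
  unfold rtAdd
  split_ifs with h1 h2 h3
  · exact absurd h1 (not_lt.2 ha)
  · exact rfl
  · exact h3 ▸ rfl
  · exact Set.mem_Icc.2 ⟨min_le_right _ _, le_max_right _ _⟩

lemma mem_rtAdd_neg {a c : ℝ} (h : |c| ≤ |a|) : c ∈ rtAdd a (-a) := by
  rcases eq_or_ne a 0 with rfl | ha
  · have hc : c = 0 := abs_nonpos_iff.1 (by simpa using h)
    subst hc
    simp [rtAdd]
  · unfold rtAdd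
    rw [abs_neg]
    have hne : a ≠ -a := fun hh => ha (by linarith)
    simp only [lt_self_iff_false, if_false, hne, if_false]
    have hcl := abs_le.1 h
    rcases le_total a 0 with h0 | h0
    · have habs : |a| = -a := abs_of_nonpos h0
      rw [min_eq_left (by linarith), max_eq_right (by linarith)]
      exact Set.mem_Icc.2 ⟨by linarith [hcl.2], by linarith [hcl.1]⟩
    · have habs : |a| = a := abs_of_nonneg h0
      rw [min_eq_right (by linarith), max_eq_left (by linarith)]
      exact Set.mem_Icc.2 ⟨by linarith [hcl.1], by linarith [hcl.2]⟩

lemma mem_rtSum_of_max : ∀ {l : List ℝ} {y : ℝ}, y ∈ l → (∀ x ∈ l, |x| ≤ |y|) → y ∈ rtSum l := by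
  intro l
  induction l with
  | nil => intro y hy _; exact absurd hy (List.not_mem_nil (a := y))
  | cons a l ih =>
    intro y hy h
    rcases List.mem_cons.1 hy with rfl | hyl
    · obtain ⟨b, hb⟩ := rtSum_nonempty l
      have hbI := rtSum_subset_Icc (abs_nonneg y)
        (fun x hx => h x (List.mem_cons_of_mem _ hx)) hb
      have hbM : |b| ≤ |y| := abs_le.2 ⟨(Set.mem_Icc.1 hbI).1, (Set.mem_Icc.1 hbI).2⟩
      rw [rtSum]
      exact Set.mem_biUnion hb (mem_rtAdd_left hbM)
    · have hyr := ih hyl (fun x hx => h x (List.mem_cons_of_mem _ hx))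
      have haM : |a| ≤ |y| := h a (List.mem_cons_self (a := a) (l := l))
      rw [rtSum]
      exact Set.mem_biUnion hyr (mem_rtAdd_right haM)

lemma Icc_subset_rtSum : ∀ {l : List ℝ} {M : ℝ}, (∀ x ∈ l, |x| ≤ M) → M ∈ l → -M ∈ l →
    Set.Icc (-M) M ⊆ rtSum l := by
  intro l
  induction l with
  | nil => intro M _ hM _; exact absurd hM (List.not_mem_nil (a := M))
  | cons a l ih =>
    intro M hb hM hM'
    have hM0 : 0 ≤ M := le_trans (abs_nonneg M) (hb M hM)
    have habsM : |M| = M := abs_of_nonneg hM0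
    have htail : ∀ x ∈ l, |x| ≤ M := fun x hx => hb x (List.mem_cons_of_mem a hx)
    intro c hc
    have hcM : |c| ≤ M := abs_le.2 ⟨(Set.mem_Icc.1 hc).1, (Set.mem_Icc.1 hc).2⟩
    rcases List.mem_cons.1 hM with hMa | hMl <;> rcases List.mem_cons.1 hM' with hMa' | hMl'
    · -- M = a and -M = a : then M = 0
      have hMzero : M = 0 := by linarith [hMa ▸ hMa', hMa, hMa']
      have hazero : a = 0 := by rw [← hMa, hMzero]
      have hczero : c = 0 := abs_nonpos_iff.1 (hMzero ▸ hcM)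
      obtain ⟨b, hbmem⟩ := rtSum_nonempty l
      have hbI := rtSum_subset_Icc (le_refl 0) (fun x hx => hMzero ▸ htail x hx) hbmem
      have hbzero : b = 0 := le_antisymm (Set.mem_Icc.1 hbI).2 (by simpa using (Set.mem_Icc.1 hbI).1)
      rw [rtSum]
      refine Set.mem_biUnion hbmem ?_
      rw [hazero, hbzero, hczero]
      simp [rtAdd]
    · -- M = a, -M ∈ l
      have hmem : -M ∈ rtSum l := mem_rtSum_of_max hMl'
        (fun x hx => by rw [abs_neg, habsM]; exact htail x hx)
      rw [rtSum]
      refine Set.mem_biUnion hmem ?_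
      rw [← hMa]
      exact mem_rtAdd_neg (by rw [habsM]; exact hcM)
    · -- -M = a, M ∈ l
      have hmem : M ∈ rtSum l := mem_rtSum_of_max hMl
        (fun x hx => by rw [habsM]; exact htail x hx)
      rw [rtSum]
      refine Set.mem_biUnion hmem ?_
      rw [← hMa']
      have : c ∈ rtAdd (-M) (-(-M)) := mem_rtAdd_neg (by rw [abs_neg, habsM]; exact hcM)
      rwa [neg_neg] at this
    · -- both in tail
      have hIcc := ih htail hMl hMl'
      have haM : |a| ≤ M := hb a (List.mem_cons_self (a := a) (l := l))
      rcases lt_or_ge (|a|) (|c|) with hac | hac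
      · rw [rtSum]
        exact Set.mem_biUnion (hIcc hc) (mem_rtAdd_right hac.le)
      · have hnegA : -a ∈ Set.Icc (-M) M := by
          have := abs_le.1 haM
          exact Set.mem_Icc.2 ⟨by linarith, by linarith⟩
        rw [rtSum]
        exact Set.mem_biUnion (hIcc hnegA) (mem_rtAdd_neg hac)

lemma zero_mem_rtSum {l : List ℝ} {M : ℝ} (hb : ∀ x ∈ l, |x| ≤ M) (hM : M ∈ l)
    (hM' : -M ∈ l) : (0 : ℝ) ∈ rtSum l := by
  have hM0 : 0 ≤ M := le_trans (abs_nonneg M) (hb M hM)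
  exact Icc_subset_rtSum hb hM hM' (Set.mem_Icc.2 ⟨neg_nonpos.2 hM0, hM0⟩)

/-! ### Auxiliary lemmas about `sgn` -/

lemma sgn_neg (x : K) : sgn (-x) = - sgn x := by
  unfold sgn
  rcases lt_trichotomy x 0 with h | rfl | h
  · rw [if_pos (neg_pos.2 h), if_neg (not_lt.2 h.le), if_pos h]; norm_num
  · simp
  · rw [if_neg (not_lt.2 (neg_nonpos.2 h.le)), if_pos (neg_lt_zero.2 h), if_pos h]

lemma sgn_pow_neg_one_mul (i : ℕ) (x : K) :
    sgn ((-1 : K) ^ i * x) = (-1 : ℝ) ^ i * sgn x := by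
  induction i with
  | zero => simp
  | succ i ih =>
    have h1 : (-1 : K) ^ (i + 1) * x = -((-1 : K) ^ i * x) := by ring
    have h2 : (-1 : ℝ) ^ (i + 1) * sgn x = -((-1 : ℝ) ^ i * sgn x) := by ring
    rw [h1, sgn_neg, ih, h2]

/-! ### Auxiliary lemmas about signed seminorms -/

section Seminorm

variable {av : AbsoluteValue K ℝ} {N : V → ℝ}

lemma ssn_zero (hN : IsSignedSeminorm av N) : N 0 = 0 := by
  have := hN.1 0 0
  rw [zero_smul] at this
  rw [this]
  simp [sgn]

lemma ssn_neg (hN : IsSignedSeminorm av N) (v : V) : N (-v) = -N v := by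
  have := hN.1 (-1) v
  rw [neg_one_smul] at this
  rw [this, sgn_neg, av.map_neg, av.map_one]
  simp [sgn]

lemma ssn_neg_seminorm (hN : IsSignedSeminorm av N) :
    IsSignedSeminorm av (fun v => -(N v)) := by
  constructor
  · intro c v
    show -(N (c • v)) = sgn c * av c * -(N v)
    rw [hN.1 c v]; ring
  · intro v w
    obtain ⟨h1, h2⟩ := hN.2 v w
    constructor
    · show min (-(N v)) (-(N w)) ≤ -(N (v + w))
      rw [min_neg_neg]
      exact neg_le_neg h2
    · show -(N (v + w)) ≤ max (-(N v)) (-(N w))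
      rw [max_neg_neg]
      exact neg_le_neg h1

lemma ssn_add_eq (hN : IsSignedSeminorm av N) {v w : V} (h : N v = N w) :
    N (v + w) = N v := by
  obtain ⟨h1, h2⟩ := hN.2 v w
  rw [← h, min_self] at h1
  rw [← h, max_self] at h2
  linarith

lemma ssn_abs_add_le (hN : IsSignedSeminorm av N) (v w : V) :
    |N (v + w)| ≤ max (|N v|) (|N w|) := by
  obtain ⟨h1, h2⟩ := hN.2 v w
  rw [abs_le]
  constructor
  · have : min (N v) (N w) ≥ -(max (|N v|) (|N w|)) := by
      rcases le_total (N v) (N w) with h | h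
      · rw [min_eq_left h]
        calc -(max (|N v|) (|N w|)) ≤ -|N v| := neg_le_neg (le_max_left _ _)
          _ ≤ N v := neg_abs_le _
      · rw [min_eq_right h]
        calc -(max (|N v|) (|N w|)) ≤ -|N w| := neg_le_neg (le_max_right _ _)
          _ ≤ N w := neg_abs_le _
    linarith
  · have : max (N v) (N w) ≤ max (|N v|) (|N w|) :=
      max_le_max (le_abs_self _) (le_abs_self _)
    linarith

lemma ssn_add_eq_of_lt (hN : IsSignedSeminorm av N) {v w : V} (h : |N w| < |N v|) :
    N (v + w) = N v := by
  obtain ⟨h1, h2⟩ := hN.2 v w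
  have hvw : v = (v + w) + (-w) := by abel
  have h3 := (hN.2 (v + w) (-w)).1
  have h4 := (hN.2 (v + w) (-w)).2
  rw [← hvw, ssn_neg hN] at h3 h4
  have habs := abs_lt.1 h
  rcases lt_trichotomy (N v) 0 with hv | hv | hv
  · have hNv : |N v| = -(N v) := abs_of_nonpos hv.le
    rw [hNv] at habs
    have hle : N (v + w) ≤ N v := by
      rcases le_or_gt (N (v + w)) (-(N w)) with hcase | hcase
      · rw [min_eq_left hcase] at h3
        exact h3
      · rw [min_eq_right hcase.le] at h3
        linarith
    have hge : N v ≤ N (v + w) := by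
      calc N v = min (N v) (N w) := (min_eq_left (by linarith)).symm
        _ ≤ N (v + w) := h1
    linarith
  · rw [hv] at h; simp at h; linarith [abs_nonneg (N w)]
  · have hNv : |N v| = N v := abs_of_nonneg hv.le
    rw [hNv] at habs
    have hle : N (v + w) ≤ N v := by
      calc N (v + w) ≤ max (N v) (N w) := h2
        _ = N v := max_eq_left (by linarith)
    have hge : N v ≤ N (v + w) := by
      rcases le_or_gt (N (v + w)) (-(N w)) with hcase | hcase
      · have : max (N (v + w)) (-(N w)) = -(N w) := max_eq_right hcase
        rw [this] at h4
        linarith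
      · have : max (N (v + w)) (-(N w)) = N (v + w) := max_eq_left hcase.le
        rw [this] at h4
        exact h4
    linarith

lemma ssn_sum_eq {ι : Type*} (hN : IsSignedSeminorm av N) (v : ι → V) {M : ℝ}
    (S : Finset ι) (hS : S.Nonempty) (h : ∀ i ∈ S, N (v i) = M) :
    N (∑ i ∈ S, v i) = M := by
  induction hS using Finset.Nonempty.cons_induction with
  | singleton i => simpa using h i (by simp)
  | cons i S hi hS ih =>
    rw [Finset.sum_cons]
    have hrest : N (∑ j ∈ S, v j) = M :=
      ih (fun j hj => h j (Finset.mem_cons_of_mem hj))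
    have hhead : N (v i) = M := h i (Finset.mem_cons_self i S)
    rw [ssn_add_eq hN (by rw [hhead, hrest]), hhead]

lemma ssn_sum_lt {ι : Type*} (hN : IsSignedSeminorm av N) (v : ι → V) {M : ℝ} (hM : 0 < M)
    (S : Finset ι) (h : ∀ i ∈ S, |N (v i)| < M) :
    |N (∑ i ∈ S, v i)| < M := by
  classical
  induction S using Finset.induction_on with
  | empty => rw [Finset.sum_empty, ssn_zero hN]; simpa using hM
  | @insert i S hi ih =>
    rw [Finset.sum_insert hi]
    calc |N (v i + ∑ j ∈ S, v j)| ≤ max (|N (v i)|) (|N (∑ j ∈ S, v j)|) :=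
          ssn_abs_add_le hN _ _
      _ < M := max_lt (h i (Finset.mem_insert_self i S))
          (ih (fun j hj => h j (Finset.mem_insert_of_mem hj)))

/-- If the `v i` sum to zero and the maximum of `|N (v i)|` is positive, it cannot be that
`N (v i)` never equals that maximum. -/
lemma ssn_not_all_ne {m : ℕ} (hN : IsSignedSeminorm av N) (v : Fin m → V)
    (hsum : ∑ i, v i = 0) {M : ℝ} (hM : 0 < M) (hb : ∀ i, |N (v i)| ≤ M)
    (hex : ∃ i, |N (v i)| = M) (hnone : ∀ i, N (v i) ≠ M) : False := by
  classical
  set S : Finset (Fin m) := Finset.univ.filter (fun i => N (v i) = -M) with hSdef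
  have hSne : S.Nonempty := by
    obtain ⟨i0, hi0⟩ := hex
    refine ⟨i0, Finset.mem_filter.2 ⟨Finset.mem_univ _, ?_⟩⟩
    rcases abs_eq hM.le |>.1 hi0 with h | h
    · exact absurd h (hnone i0)
    · exact h
  have hSsum : N (∑ i ∈ S, v i) = -M :=
    ssn_sum_eq hN v S hSne (fun i hi => (Finset.mem_filter.1 hi).2)
  have hScsum : |N (∑ i ∈ Sᶜ, v i)| < M := by
    refine ssn_sum_lt hN v hM Sᶜ (fun i hi => ?_)
    have h1 : N (v i) ≠ -M := by
      intro h
      exact (Finset.mem_compl.1 hi) (Finset.mem_filter.2 ⟨Finset.mem_univ _, h⟩)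
    rcases lt_or_eq_of_le (hb i) with h | h
    · exact h
    · rcases abs_eq hM.le |>.1 h with h' | h'
      · exact absurd h' (hnone i)
      · exact absurd h' h1
  have htotal : N ((∑ i ∈ S, v i) + ∑ i ∈ Sᶜ, v i) = -M := by
    rw [ssn_add_eq_of_lt hN, hSsum]
    rw [hSsum, abs_neg, abs_of_nonneg hM.le]
    exact hScsum
  rw [Finset.sum_add_sum_compl, hsum, ssn_zero hN] at htotal
  linarith

lemma ssn_exists_pm_max {m : ℕ} (hN : IsSignedSeminorm av N) (v : Fin (m + 1) → V)
    (hsum : ∑ i, v i = 0) :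
    ∃ M : ℝ, (∀ i, |N (v i)| ≤ M) ∧ (∃ i, N (v i) = M) ∧ (∃ j, N (v j) = -M) := by
  classical
  have hne : (Finset.univ : Finset (Fin (m + 1))).Nonempty := Finset.univ_nonempty
  set M : ℝ := Finset.univ.sup' hne (fun i => |N (v i)|) with hMdef
  have hb : ∀ i, |N (v i)| ≤ M :=
    fun i => Finset.le_sup' (fun i => |N (v i)|) (Finset.mem_univ i)
  obtain ⟨i0, _, hi0⟩ := Finset.exists_mem_eq_sup' hne (fun i => |N (v i)|)
  rw [← hMdef] at hi0
  have hex : ∃ i, |N (v i)| = M := ⟨i0, hi0.symm⟩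
  rcases eq_or_lt_of_le (abs_nonneg (N (v i0))) with h0 | h0
  · -- M = 0
    have hM0 : M = 0 := by rw [← hi0.symm, ← h0]
    refine ⟨M, hb, ⟨i0, ?_⟩, ⟨i0, ?_⟩⟩
    · rw [hM0]; exact abs_nonpos_iff.1 (le_of_eq (hi0.symm.trans hM0))
    · rw [hM0, neg_zero]; exact abs_nonpos_iff.1 (le_of_eq (hi0.symm.trans hM0))
  · have hM : 0 < M := hi0 ▸ h0
    refine ⟨M, hb, ?_, ?_⟩
    · by_contra hcon
      push_neg at hcon
      exact ssn_not_all_ne hN v hsum hM hb hex hcon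
    · by_contra hcon
      push_neg at hcon
      have hN' := ssn_neg_seminorm hN
      refine ssn_not_all_ne hN' v hsum hM (fun i => by simpa using hb i) ?_ ?_
      · obtain ⟨i, hi⟩ := hex
        exact ⟨i, by simpa using hi⟩
      · intro i h
        exact hcon i (by linarith [neg_eq_iff_eq_neg.1 h])

end Seminorm

/-! ### Cramer's rule -/

lemma cramer_relation {n : ℕ} (C : Fin (n + 2) → Fin (n + 1) → K) :
    ∑ i : Fin (n + 2),
      (((-1 : K) ^ (i : ℕ)) * (Matrix.of fun j => C (i.succAbove j)).det) • C i = 0 := by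
  funext k
  rw [Finset.sum_apply]
  have hB : ∀ i : Fin (n + 2),
      ((((-1 : K) ^ (i : ℕ)) * (Matrix.of fun j => C (i.succAbove j)).det) • C i) k
      = ((-1 : K) ^ (i : ℕ)) * (Matrix.of fun j => C (i.succAbove j)).det * C i k :=
    fun i => rfl
  simp only [hB]
  set B : Matrix (Fin (n + 2)) (Fin (n + 2)) K :=
    Matrix.of fun i => Fin.cons (C i k) (C i) with hBdef
  have hdet0 : B.det = 0 := by
    refine Matrix.det_zero_of_column_eq (i := 0) (j := k.succ) (Fin.succ_ne_zero k).symm ?_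
    intro x
    show (Fin.cons (C x k) (C x) : Fin (n + 2) → K) 0
        = (Fin.cons (C x k) (C x) : Fin (n + 2) → K) k.succ
    rw [Fin.cons_zero, Fin.cons_succ]
  have hexp := Matrix.det_succ_column_zero B
  rw [hdet0] at hexp
  have hsub : ∀ i : Fin (n + 2),
      (B.submatrix i.succAbove Fin.succ) = (Matrix.of fun j => C (i.succAbove j)) := by
    intro i
    ext j l
    show (Fin.cons (C (i.succAbove j) k) (C (i.succAbove j)) : Fin (n + 2) → K) l.succ
        = C (i.succAbove j) l
    rw [Fin.cons_succ]
  have hB0 : ∀ i : Fin (n + 2), B i 0 = C i k := fun i => rfl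
  rw [Finset.sum_congr rfl (fun i _ => by rw [hsub i, hB0 i])] at hexp
  have hgoal : ∑ i : Fin (n + 2),
      ((-1 : K) ^ (i : ℕ)) * (Matrix.of fun j => C (i.succAbove j)).det * C i k = 0 :=
    calc ∑ i : Fin (n + 2),
        ((-1 : K) ^ (i : ℕ)) * (Matrix.of fun j => C (i.succAbove j)).det * C i k
        = ∑ i : Fin (n + 2),
          ((-1 : K) ^ (i : ℕ)) * C i k * (Matrix.of fun j => C (i.succAbove j)).det :=
          Finset.sum_congr rfl (fun i _ => by ring)
      _ = 0 := hexp.symm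
  rw [hgoal]
  rfl

/-- Every signed seminorm lies in the real tropical linear space of the universal
realizable oriented valuated matroid: for every `(n+2)`-tuple `C` of functionals,
`0` lies in the hypersum `⊕ᵢ (-1)^i ‖fᵢ‖ · φ_univ(C - fᵢ)`. -/
theorem signedSeminorm_in_tropMuniv {n : ℕ}
    (hK : IsRealClosed' K) (av : AbsoluteValue K ℝ) (hna : IsNonarch av) (hcomp : Compat av)
    (N : (Fin (n + 1) → K) → ℝ) (hN : IsSignedSeminorm av N)
    (C : Fin (n + 2) → Fin (n + 1) → K) :
    (0 : ℝ) ∈ rtSum (((List.finRange (n + 2)).map fun i : Fin (n + 2) =>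
      ((-1 : ℝ) ^ (i : ℕ)) * N (C i) * phiUniv av (fun j => C (i.succAbove j)))) := by
  classical
  set d : Fin (n + 2) → K := fun i => (Matrix.of fun j => C (i.succAbove j)).det with hd
  set v : Fin (n + 2) → (Fin (n + 1) → K) :=
    fun i => (((-1 : K) ^ (i : ℕ)) * d i) • C i with hv
  have hsum : ∑ i, v i = 0 := cramer_relation C
  have hval : ∀ i : Fin (n + 2),
      ((-1 : ℝ) ^ (i : ℕ)) * N (C i) * phiUniv av (fun j => C (i.succAbove j)) = N (v i) := by
    intro i
    have hvi : N (v i) = sgn ((-1 : K) ^ (i : ℕ) * d i) * av ((-1 : K) ^ (i : ℕ) * d i)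
        * N (C i) := hN.1 ((-1 : K) ^ (i : ℕ) * d i) (C i)
    have havm : av ((-1 : K) ^ (i : ℕ) * d i) = av (d i) := by
      rw [map_mul, map_pow, av.map_neg, av.map_one, one_pow, one_mul]
    rw [hvi, havm, sgn_pow_neg_one_mul]
    unfold phiUniv
    have hdi : (Matrix.of fun j => C (i.succAbove j)).det = d i := rfl
    rw [hdi]
    ring
  obtain ⟨M, hb, ⟨i1, h1⟩, ⟨i2, h2⟩⟩ := ssn_exists_pm_max hN v hsum
  refine zero_mem_rtSum (M := M) ?_ ?_ ?_
  · intro x hx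
    obtain ⟨i, _, hi⟩ := List.mem_map.1 hx
    rw [← hi, hval i]
    exact hb i
  · exact List.mem_map.2 ⟨i1, List.mem_finRange i1, (hval i1).trans h1⟩
  · exact List.mem_map.2 ⟨i2, List.mem_finRange i2, (hval i2).trans h2⟩
end
end
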